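/- Let p ∈ (1/2, 1), 0 < ε < η, and define w*(η) = (ln p − ln(1−p))/(2η). Let u_η(w) = p·Φ((w+ηd)/√d) + (1−p)·Φ((−w+ηd)/√d) for fixed d > 0. Then max_w u_{η−ε}(w) = u_{η−ε}(w*(η−ε)) < u_η(w*(η)) = max_w u_η(w). That is, the optimal adversarial accuracy under perturbation budget ε is strictly smaller than the optimal clean accuracy. -/

import Mathlib

open MeasureTheory Real Set

/-- Standard normal cumulative distribution function. -/
noncomputable def stdNormalCDF (x : ℝ) : ℝ :=
  ∫ t in Set.Iic x, (Real.sqrt (2 * Real.pi))⁻¹ * Real.exp (-t ^ 2 / 2)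

/-- Standard normal density. -/
noncomputable def stdPdf (t : ℝ) : ℝ := (Real.sqrt (2 * Real.pi))⁻¹ * Real.exp (-t ^ 2 / 2)

lemma stdPdf_pos (t : ℝ) : 0 < stdPdf t := by
  unfold stdPdf
  have : (0:ℝ) < Real.sqrt (2 * Real.pi) := Real.sqrt_pos.2 (by positivity)
  positivity

lemma stdPdf_even (t : ℝ) : stdPdf (-t) = stdPdf t := by
  unfold stdPdf; rw [neg_sq]

lemma stdPdf_cont : Continuous stdPdf := by
  unfold stdPdf; fun_prop

lemma stdPdf_integrable : Integrable stdPdf := by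
  have h := (integrable_exp_neg_mul_sq (by norm_num : (0:ℝ) < 1/2)).const_mul
    (Real.sqrt (2 * Real.pi))⁻¹
  refine h.congr ?_
  filter_upwards with t
  unfold stdPdf
  ring_nf

lemma stdNormalCDF_eq (x : ℝ) :
    stdNormalCDF x = stdNormalCDF 0 + ∫ t in (0:ℝ)..x, stdPdf t := by
  have h := intervalIntegral.integral_Iic_sub_Iic (f := stdPdf) (μ := volume)
    (stdPdf_integrable.integrableOn) (stdPdf_integrable.integrableOn) (a := 0) (b := x)
  unfold stdNormalCDF
  unfold stdPdf at h ⊢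
  linarith [h]

lemma stdNormalCDF_hasDeriv (x : ℝ) : HasDerivAt stdNormalCDF (stdPdf x) x := by
  have h : HasDerivAt (fun y => stdNormalCDF 0 + ∫ t in (0:ℝ)..y, stdPdf t) (stdPdf x) x := by
    refine HasDerivAt.const_add _ ?_
    exact intervalIntegral.integral_hasDerivAt_right
      (stdPdf_integrable.intervalIntegrable)
      (stdPdf_cont.aestronglyMeasurable.stronglyMeasurableAtFilter)
      (stdPdf_cont.continuousAt)
  exact h.congr_of_eventuallyEq (by filter_upwards with y using (stdNormalCDF_eq y))

lemma stdNormalCDF_strictMono : StrictMono stdNormalCDF := by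
  intro x y hxy
  have h : stdNormalCDF y - stdNormalCDF x = ∫ t in x..y, stdPdf t := by
    rw [stdNormalCDF_eq x, stdNormalCDF_eq y]
    rw [← intervalIntegral.integral_add_adjacent_intervals
      (stdPdf_integrable.intervalIntegrable (a := 0) (b := x))
      (stdPdf_integrable.intervalIntegrable (a := x) (b := y))]
    ring
  have hpos : 0 < ∫ t in x..y, stdPdf t :=
    intervalIntegral.intervalIntegral_pos_of_pos stdPdf_integrable.intervalIntegrable
      stdPdf_pos hxy
  linarith

/-- Maximality of `w* = (log p - log (1-p)) / (2a)` for the accuracy function. -/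
lemma key_max (p a d : ℝ) (hp : p ∈ Set.Ioo (1/2 : ℝ) 1) (ha : 0 < a) (hd : 0 < d) (w : ℝ) :
    p * stdNormalCDF ((w + a * d) / Real.sqrt d) +
      (1 - p) * stdNormalCDF ((-w + a * d) / Real.sqrt d) ≤
    p * stdNormalCDF (((Real.log p - Real.log (1 - p)) / (2 * a) + a * d) / Real.sqrt d) +
      (1 - p) * stdNormalCDF ((-((Real.log p - Real.log (1 - p)) / (2 * a)) + a * d) /
        Real.sqrt d) := by
  obtain ⟨hp1, hp2⟩ := hp
  have hp0 : 0 < p := by linarith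
  have hq0 : 0 < 1 - p := by linarith
  set s : ℝ := Real.sqrt d with hs_def
  have hs : 0 < s := Real.sqrt_pos.2 hd
  have hs2 : s ^ 2 = d := Real.sq_sqrt hd.le
  set wstar : ℝ := (Real.log p - Real.log (1 - p)) / (2 * a) with hw_def
  set F : ℝ → ℝ := fun w =>
    p * stdNormalCDF ((w + a * d) / s) + (1 - p) * stdNormalCDF ((-w + a * d) / s) with hF_def
  set F' : ℝ → ℝ := fun w =>
    (p * stdPdf ((w + a * d) / s) - (1 - p) * stdPdf ((w - a * d) / s)) / s with hF'_def
  have hF : ∀ x : ℝ, HasDerivAt F (F' x) x := by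
    intro x
    have h1 : HasDerivAt (fun y : ℝ => (y + a * d) / s) (1 / s) x :=
      ((hasDerivAt_id x).add_const _).div_const s
    have h2 : HasDerivAt (fun y : ℝ => (-y + a * d) / s) (-1 / s) x := by
      have := (((hasDerivAt_id x).neg).add_const (a * d)).div_const s
      exact this
    have hc1 := ((stdNormalCDF_hasDeriv ((x + a * d) / s)).comp x h1).const_mul p
    have hc2 := ((stdNormalCDF_hasDeriv ((-x + a * d) / s)).comp x h2).const_mul (1 - p)
    have hsum := hc1.add hc2
    have heq : stdPdf ((-x + a * d) / s) = stdPdf ((x - a * d) / s) := by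
      rw [show (-x + a * d) / s = -((x - a * d) / s) by ring, stdPdf_even]
    refine hsum.congr_deriv ?_
    show _ = (p * stdPdf ((x + a * d) / s) - (1 - p) * stdPdf ((x - a * d) / s)) / s
    rw [heq]
    ring
  have hdiff : Differentiable ℝ F := fun x => (hF x).differentiableAt
  -- sign of the derivative
  have hsign : ∀ x : ℝ, x ≤ wstar → 0 ≤ F' x := by
    intro x hx
    have hlog : 2 * a * x ≤ Real.log p - Real.log (1 - p) := by
      rw [hw_def] at hx
      have := (le_div_iff₀ (by positivity : (0:ℝ) < 2 * a)).1 hx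
      linarith
    have hAB : ((x + a * d) / s) ^ 2 - ((x - a * d) / s) ^ 2 = 4 * a * x := by
      field_simp
      nlinarith [hs2]
    have : (1 - p) * stdPdf ((x - a * d) / s) ≤ p * stdPdf ((x + a * d) / s) := by
      unfold stdPdf
      have hc : (0:ℝ) < (Real.sqrt (2 * Real.pi))⁻¹ := by
        have : (0:ℝ) < Real.sqrt (2 * Real.pi) := Real.sqrt_pos.2 (by positivity)
        positivity
      rw [show (1 - p) * ((Real.sqrt (2 * Real.pi))⁻¹ * Real.exp (-((x - a*d)/s) ^ 2 / 2))
        = (Real.sqrt (2 * Real.pi))⁻¹ * ((1 - p) * Real.exp (-((x - a*d)/s) ^ 2 / 2)) by ring,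
        show p * ((Real.sqrt (2 * Real.pi))⁻¹ * Real.exp (-((x + a*d)/s) ^ 2 / 2))
        = (Real.sqrt (2 * Real.pi))⁻¹ * (p * Real.exp (-((x + a*d)/s) ^ 2 / 2)) by ring]
      refine mul_le_mul_of_nonneg_left ?_ hc.le
      calc (1 - p) * Real.exp (-((x - a*d)/s) ^ 2 / 2)
          = Real.exp (Real.log (1 - p) + -((x - a*d)/s) ^ 2 / 2) := by
            rw [Real.exp_add, Real.exp_log hq0]
        _ ≤ Real.exp (Real.log p + -((x + a*d)/s) ^ 2 / 2) := by
            apply Real.exp_le_exp.2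
            nlinarith [hAB]
        _ = p * Real.exp (-((x + a*d)/s) ^ 2 / 2) := by
            rw [Real.exp_add, Real.exp_log hp0]
    have : 0 ≤ p * stdPdf ((x + a * d) / s) - (1 - p) * stdPdf ((x - a * d) / s) := by linarith
    exact div_nonneg this hs.le
  have hsign' : ∀ x : ℝ, wstar ≤ x → F' x ≤ 0 := by
    intro x hx
    have hlog : Real.log p - Real.log (1 - p) ≤ 2 * a * x := by
      rw [hw_def] at hx
      have := (div_le_iff₀ (by positivity : (0:ℝ) < 2 * a)).1 hx
      linarith
    have hAB : ((x + a * d) / s) ^ 2 - ((x - a * d) / s) ^ 2 = 4 * a * x := by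
      field_simp
      nlinarith [hs2]
    have : p * stdPdf ((x + a * d) / s) ≤ (1 - p) * stdPdf ((x - a * d) / s) := by
      unfold stdPdf
      have hc : (0:ℝ) < (Real.sqrt (2 * Real.pi))⁻¹ := by
        have : (0:ℝ) < Real.sqrt (2 * Real.pi) := Real.sqrt_pos.2 (by positivity)
        positivity
      rw [show (1 - p) * ((Real.sqrt (2 * Real.pi))⁻¹ * Real.exp (-((x - a*d)/s) ^ 2 / 2))
        = (Real.sqrt (2 * Real.pi))⁻¹ * ((1 - p) * Real.exp (-((x - a*d)/s) ^ 2 / 2)) by ring,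
        show p * ((Real.sqrt (2 * Real.pi))⁻¹ * Real.exp (-((x + a*d)/s) ^ 2 / 2))
        = (Real.sqrt (2 * Real.pi))⁻¹ * (p * Real.exp (-((x + a*d)/s) ^ 2 / 2)) by ring]
      refine mul_le_mul_of_nonneg_left ?_ hc.le
      calc p * Real.exp (-((x + a*d)/s) ^ 2 / 2)
          = Real.exp (Real.log p + -((x + a*d)/s) ^ 2 / 2) := by
            rw [Real.exp_add, Real.exp_log hp0]
        _ ≤ Real.exp (Real.log (1 - p) + -((x - a*d)/s) ^ 2 / 2) := by
            apply Real.exp_le_exp.2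
            nlinarith [hAB]
        _ = (1 - p) * Real.exp (-((x - a*d)/s) ^ 2 / 2) := by
            rw [Real.exp_add, Real.exp_log hq0]
    have : p * stdPdf ((x + a * d) / s) - (1 - p) * stdPdf ((x - a * d) / s) ≤ 0 := by linarith
    exact div_nonpos_of_nonpos_of_nonneg this hs.le
  -- conclude
  have hgoal : F w ≤ F wstar := by
    rcases le_total w wstar with h | h
    · have hmono : MonotoneOn F (Set.Iic wstar) := by
        refine monotoneOn_of_deriv_nonneg (convex_Iic _) hdiff.continuous.continuousOn
          hdiff.differentiableOn ?_
        intro x hx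
        rw [interior_Iic] at hx
        rw [(hF x).deriv]
        exact hsign x (le_of_lt hx)
      exact hmono (Set.mem_Iic.2 h) (Set.mem_Iic.2 le_rfl) h
    · have hanti : AntitoneOn F (Set.Ici wstar) := by
        refine antitoneOn_of_deriv_nonpos (convex_Ici _) hdiff.continuous.continuousOn
          hdiff.differentiableOn ?_
        intro x hx
        rw [interior_Ici] at hx
        rw [(hF x).deriv]
        exact hsign' x (le_of_lt hx)
      exact hanti (Set.mem_Ici.2 le_rfl) (Set.mem_Ici.2 h) h
  exact hgoal

theorem adversarial_vs_clean_optimal_accuracy (p η d ε : ℝ)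
    (hp : p ∈ Set.Ioo (1/2 : ℝ) 1) (hd : 0 < d) (hε : 0 < ε) (hεη : ε < η) :
    (∀ w : ℝ,
      p * stdNormalCDF ((w + (η - ε) * d) / Real.sqrt d) +
        (1 - p) * stdNormalCDF ((-w + (η - ε) * d) / Real.sqrt d) ≤
      p * stdNormalCDF (((Real.log p - Real.log (1 - p)) / (2 * (η - ε)) + (η - ε) * d) /
          Real.sqrt d) +
        (1 - p) * stdNormalCDF ((-((Real.log p - Real.log (1 - p)) / (2 * (η - ε))) +
          (η - ε) * d) / Real.sqrt d)) ∧
    (∀ w : ℝ,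
      p * stdNormalCDF ((w + η * d) / Real.sqrt d) +
        (1 - p) * stdNormalCDF ((-w + η * d) / Real.sqrt d) ≤
      p * stdNormalCDF (((Real.log p - Real.log (1 - p)) / (2 * η) + η * d) / Real.sqrt d) +
        (1 - p) * stdNormalCDF ((-((Real.log p - Real.log (1 - p)) / (2 * η)) + η * d) /
          Real.sqrt d)) ∧
    (p * stdNormalCDF (((Real.log p - Real.log (1 - p)) / (2 * (η - ε)) + (η - ε) * d) /
          Real.sqrt d) +
        (1 - p) * stdNormalCDF ((-((Real.log p - Real.log (1 - p)) / (2 * (η - ε))) +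
          (η - ε) * d) / Real.sqrt d) <
      p * stdNormalCDF (((Real.log p - Real.log (1 - p)) / (2 * η) + η * d) / Real.sqrt d) +
        (1 - p) * stdNormalCDF ((-((Real.log p - Real.log (1 - p)) / (2 * η)) + η * d) /
          Real.sqrt d)) := by
  obtain ⟨hp1, hp2⟩ := hp
  have hp0 : 0 < p := by linarith
  have hq0 : 0 < 1 - p := by linarith
  have ha1 : (0:ℝ) < η - ε := by linarith
  have ha2 : (0:ℝ) < η := by linarith
  have hs : (0:ℝ) < Real.sqrt d := Real.sqrt_pos.2 hd
  refine ⟨key_max p (η - ε) d ⟨hp1, hp2⟩ ha1 hd,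
    key_max p η d ⟨hp1, hp2⟩ ha2 hd, ?_⟩
  set w₁ : ℝ := (Real.log p - Real.log (1 - p)) / (2 * (η - ε)) with hw1
  have hstep : p * stdNormalCDF ((w₁ + (η - ε) * d) / Real.sqrt d) +
      (1 - p) * stdNormalCDF ((-w₁ + (η - ε) * d) / Real.sqrt d) <
      p * stdNormalCDF ((w₁ + η * d) / Real.sqrt d) +
      (1 - p) * stdNormalCDF ((-w₁ + η * d) / Real.sqrt d) := by
    have h1 : stdNormalCDF ((w₁ + (η - ε) * d) / Real.sqrt d) <
        stdNormalCDF ((w₁ + η * d) / Real.sqrt d) := by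
      apply stdNormalCDF_strictMono
      apply div_lt_div_of_pos_right ?_ hs
      nlinarith
    have h2 : stdNormalCDF ((-w₁ + (η - ε) * d) / Real.sqrt d) <
        stdNormalCDF ((-w₁ + η * d) / Real.sqrt d) := by
      apply stdNormalCDF_strictMono
      apply div_lt_div_of_pos_right ?_ hs
      nlinarith
    have := mul_lt_mul_of_pos_left h1 hp0
    have := mul_lt_mul_of_pos_left h2 hq0
    linarith
  calc p * stdNormalCDF ((w₁ + (η - ε) * d) / Real.sqrt d) +
        (1 - p) * stdNormalCDF ((-w₁ + (η - ε) * d) / Real.sqrt d)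
      < p * stdNormalCDF ((w₁ + η * d) / Real.sqrt d) +
        (1 - p) * stdNormalCDF ((-w₁ + η * d) / Real.sqrt d) := hstep
    _ ≤ p * stdNormalCDF (((Real.log p - Real.log (1 - p)) / (2 * η) + η * d) / Real.sqrt d) +
        (1 - p) * stdNormalCDF ((-((Real.log p - Real.log (1 - p)) / (2 * η)) + η * d) /
          Real.sqrt d) := key_max p η d ⟨hp1, hp2⟩ ha2 hd w₁
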